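/- arXiv:2301.03438 — 8 statements merged into one kernel-verified Lean document; each statement's English description precedes it below -/
import Mathlib

section
/- Let d ≥ 1, U ≥ 0, and tₙ₋₁ < tₙ with Δt := tₙ − tₙ₋₁. Let u : ℝ^d × ℝ → ℝ^d be measurable with |u(x,t)| ≤ U for all (x,t). Let f : ℝ^d → ℝ be continuously differentiable with compact support. Let X : ℝ^d × [tₙ₋₁, tₙ] → ℝ^d be measurable such that: (i) X(x,tₙ) = x for all x; (ii) for each x the map τ ↦ X(x,τ) is differentiable with ∂X/∂τ(x,τ) = u(X(x,τ),τ); and (iii) for each τ ∈ [tₙ₋₁,tₙ] the map x ↦ X(x,τ) preserves Lebesgue measure on ℝ^d. Then (∫_{ℝ^d} |f(X(x,tₙ₋₁)) − f(x)|² dx)^{1/2} ≤ Δt · U · (∫_{ℝ^d} |∇f(x)|² dx)^{1/2}. -/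
open MeasureTheory Set
open scoped ENNReal

-- Cauchy–Schwarz for lintegrals: (∫⁻ g)² ≤ μ(univ) * ∫⁻ g²
lemma cs_lintegral {α : Type*} [MeasurableSpace α] (μ : Measure α) (g : α → ℝ≥0∞)
    (hg : AEMeasurable g μ) :
    (∫⁻ τ, g τ ∂μ) ^ 2 ≤ μ univ * ∫⁻ τ, g τ ^ 2 ∂μ := by
  have hpq : Real.HolderConjugate 2 2 := Real.holderConjugate_iff.mpr ⟨one_lt_two, by norm_num⟩
  have h := ENNReal.lintegral_mul_le_Lp_mul_Lq μ hpq hg aemeasurable_const (g := fun _ => 1)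
  simp only [Pi.mul_apply, mul_one, ENNReal.one_rpow, lintegral_const, one_mul] at h
  calc (∫⁻ τ, g τ ∂μ) ^ 2
      ≤ ((∫⁻ τ, g τ ^ (2:ℝ) ∂μ) ^ (1/2:ℝ) * (μ univ) ^ (1/2:ℝ)) ^ 2 :=
      pow_le_pow_left' h 2
    _ = (∫⁻ τ, g τ ^ (2:ℝ) ∂μ) * μ univ := by
        rw [mul_pow, ← ENNReal.rpow_natCast (_ ^ (1/2:ℝ)) 2,
          ← ENNReal.rpow_natCast ((μ univ) ^ (1/2:ℝ)) 2, ← ENNReal.rpow_mul,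
          ← ENNReal.rpow_mul]
        norm_num
    _ = μ univ * ∫⁻ τ, g τ ^ 2 ∂μ := by
        rw [mul_comm]
        congr 1
        refine lintegral_congr fun τ => ?_
        rw [← ENNReal.rpow_natCast (g τ) 2]
        norm_num

/-- **Transport estimate along the characteristics.**
If `‖u‖ ≤ U`, `f` is `C¹` with compact support, and `X(·,τ)` is the (measure-preserving)
characteristic flow with `X(x,t₁) = x` and `∂X/∂τ = u(X,τ)` on `[t₀,t₁]`, then
`‖f ∘ X(·,t₀) − f‖_{L²} ≤ (t₁−t₀)·U·‖∇f‖_{L²}`. -/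
theorem transport_L2_estimate (d : ℕ) (hd : 1 ≤ d) (U : ℝ) (hU : 0 ≤ U)
    (t0 t1 : ℝ) (ht : t0 < t1)
    (u : EuclideanSpace ℝ (Fin d) → ℝ → EuclideanSpace ℝ (Fin d))
    (hum : Measurable (fun p : EuclideanSpace ℝ (Fin d) × ℝ => u p.1 p.2))
    (hub : ∀ x t, ‖u x t‖ ≤ U)
    (f : EuclideanSpace ℝ (Fin d) → ℝ)
    (hf : ContDiff ℝ 1 f) (hfc : HasCompactSupport f)
    (X : EuclideanSpace ℝ (Fin d) → ℝ → EuclideanSpace ℝ (Fin d))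
    (hXm : Measurable (fun p : EuclideanSpace ℝ (Fin d) × ℝ => X p.1 p.2))
    (hX1 : ∀ x, X x t1 = x)
    (hX2 : ∀ x, ∀ τ ∈ Icc t0 t1, HasDerivAt (X x) (u (X x τ) τ) τ)
    (hX3 : ∀ τ ∈ Icc t0 t1, MeasurePreserving (fun x => X x τ) volume volume) :
    Real.sqrt (∫ x, (f (X x t0) - f x) ^ 2) ≤
      (t1 - t0) * U * Real.sqrt (∫ x, ‖gradient f x‖ ^ 2) := by
  have hfd : Differentiable ℝ f := hf.differentiable one_ne_zero
  have hfderivc : Continuous (fderiv ℝ f) := hf.continuous_fderiv one_ne_zero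
  have hgradc : Continuous (gradient f) := by
    exact (LinearIsometryEquiv.continuous _).comp hfderivc
  have hnorm : ∀ y : (EuclideanSpace ℝ (Fin d)), ‖gradient f y‖ = ‖fderiv ℝ f y‖ := fun y =>
    LinearIsometryEquiv.norm_map _ _
  -- bound on the derivative
  obtain ⟨M, hM⟩ : ∃ M, ∀ y : (EuclideanSpace ℝ (Fin d)), ‖fderiv ℝ f y‖ ≤ M :=
    (hfc.fderiv ℝ).exists_bound_of_continuous hfderivc
  have hM0 : 0 ≤ M := le_trans (norm_nonneg _) (hM 0)
  -- the ennreal squared gradient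
  set G : (EuclideanSpace ℝ (Fin d)) → ℝ≥0∞ := fun y => ENNReal.ofReal (‖gradient f y‖ ^ 2) with hG
  have hGm : Measurable G := (ENNReal.continuous_ofReal.comp
    ((hgradc.norm).pow 2)).measurable
  set K : ℝ≥0∞ := ∫⁻ y, G y with hK
  -- K is finite
  have hKfin : K ≠ ⊤ := by
    have hcs : HasCompactSupport (fun y : (EuclideanSpace ℝ (Fin d)) => ‖gradient f y‖ ^ 2) := by
      have h1 : HasCompactSupport (gradient f) :=
        (hfc.fderiv ℝ).comp_left (g := (LinearIsometryEquiv.symm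
          (InnerProductSpace.toDual ℝ (EuclideanSpace ℝ (Fin d))) : ((EuclideanSpace ℝ (Fin d)) →L[ℝ] ℝ) → (EuclideanSpace ℝ (Fin d)))) (map_zero _)
      exact h1.comp_left (g := fun v : (EuclideanSpace ℝ (Fin d)) => ‖v‖ ^ 2) (by simp)
    have hint : Integrable (fun y : (EuclideanSpace ℝ (Fin d)) => ‖gradient f y‖ ^ 2) :=
      ((hgradc.norm).pow 2).integrable_of_hasCompactSupport hcs
    exact hint.lintegral_lt_top.ne
  -- pointwise bound
  have key : ∀ x : (EuclideanSpace ℝ (Fin d)), |f (X x t0) - f x| ≤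
      ∫ τ in t0..t1, U * ‖gradient f (X x τ)‖ := by
    intro x
    set φ' : ℝ → ℝ := fun τ => (fderiv ℝ f (X x τ)) (u (X x τ) τ) with hφ'
    have hder : ∀ τ ∈ Icc t0 t1, HasDerivAt (fun s => f (X x s)) (φ' τ) τ :=
      fun τ hτ => ((hfd (X x τ)).hasFDerivAt).comp_hasDerivAt τ (hX2 x τ hτ)
    have hXcont : ContinuousOn (X x) (Icc t0 t1) := fun τ hτ =>
      ((hX2 x τ hτ).continuousAt).continuousWithinAt
    have hXaem : AEMeasurable (X x) (volume.restrict (Ioc t0 t1)) :=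
      (hXcont.mono Ioc_subset_Icc_self).aemeasurable measurableSet_Ioc
    have huaem : AEMeasurable (fun τ => u (X x τ) τ) (volume.restrict (Ioc t0 t1)) :=
      hum.comp_aemeasurable (hXaem.prodMk aemeasurable_id)
    have hLaem : AEMeasurable (fun τ => fderiv ℝ f (X x τ)) (volume.restrict (Ioc t0 t1)) :=
      hfderivc.measurable.comp_aemeasurable hXaem
    have hφaem : AEMeasurable φ' (volume.restrict (Ioc t0 t1)) :=
      (isBoundedBilinearMap_apply.continuous).measurable.comp_aemeasurable (hLaem.prodMk huaem)
    have hφbd : ∀ τ, |φ' τ| ≤ ‖fderiv ℝ f (X x τ)‖ * U := fun τ =>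
      le_trans ((fderiv ℝ f (X x τ)).le_opNorm _)
        (mul_le_mul_of_nonneg_left (hub _ _) (norm_nonneg _))
    have hφint : IntervalIntegrable φ' volume t0 t1 := by
      rw [intervalIntegrable_iff_integrableOn_Ioc_of_le ht.le]
      refine Integrable.mono' (integrable_const (M * U)) hφaem.aestronglyMeasurable
        (ae_of_all _ fun τ => ?_)
      exact le_trans (hφbd τ) (mul_le_mul_of_nonneg_right (hM _) hU)
    have hψaem : AEMeasurable (fun τ => U * ‖gradient f (X x τ)‖)
        (volume.restrict (Ioc t0 t1)) :=
      (continuous_const.mul (hgradc.norm)).measurable.comp_aemeasurable hXaem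
    have hψint : IntervalIntegrable (fun τ => U * ‖gradient f (X x τ)‖) volume t0 t1 := by
      rw [intervalIntegrable_iff_integrableOn_Ioc_of_le ht.le]
      refine Integrable.mono' (integrable_const (U * M)) hψaem.aestronglyMeasurable
        (ae_of_all _ fun τ => ?_)
      rw [Real.norm_eq_abs, abs_of_nonneg (by positivity)]
      exact mul_le_mul_of_nonneg_left (le_trans (le_of_eq (hnorm _)) (hM _)) hU
    have hFTC : ∫ τ in t0..t1, φ' τ = f (X x t1) - f (X x t0) :=
      intervalIntegral.integral_eq_sub_of_hasDerivAt
        (fun τ hτ => hder τ (by rwa [uIcc_of_le ht.le] at hτ)) hφint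
    calc |f (X x t0) - f x| = |∫ τ in t0..t1, φ' τ| := by
          rw [hFTC, hX1 x, abs_sub_comm]
      _ ≤ ∫ τ in t0..t1, |φ' τ| :=
          intervalIntegral.abs_integral_le_integral_abs ht.le
      _ ≤ ∫ τ in t0..t1, U * ‖gradient f (X x τ)‖ := by
          refine intervalIntegral.integral_mono_on ht.le hφint.abs hψint fun τ hτ => ?_
          rw [mul_comm]
          exact le_trans (hφbd τ) (mul_le_mul_of_nonneg_right (le_of_eq (hnorm _).symm) hU)
  -- ennreal pointwise bound
  set P : (EuclideanSpace ℝ (Fin d)) → ℝ≥0∞ :=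
    fun x => ENNReal.ofReal ((f (X x t0) - f x) ^ 2) with hP
  have key2 : ∀ x, P x ≤ ENNReal.ofReal (t1 - t0) * ENNReal.ofReal (U ^ 2) *
      ∫⁻ τ in Ioc t0 t1, G (X x τ) := by
    intro x
    have hXcont : ContinuousOn (X x) (Icc t0 t1) := fun τ hτ =>
      ((hX2 x τ hτ).continuousAt).continuousWithinAt
    have hXaem : AEMeasurable (X x) (volume.restrict (Ioc t0 t1)) :=
      (hXcont.mono Ioc_subset_Icc_self).aemeasurable measurableSet_Ioc
    have hψaem : AEMeasurable (fun τ => U * ‖gradient f (X x τ)‖)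
        (volume.restrict (Ioc t0 t1)) :=
      (continuous_const.mul (hgradc.norm)).measurable.comp_aemeasurable hXaem
    have hψint : IntegrableOn (fun τ => U * ‖gradient f (X x τ)‖) (Ioc t0 t1) := by
      refine Integrable.mono' (integrable_const (U * M)) hψaem.aestronglyMeasurable
        (ae_of_all _ fun τ => ?_)
      rw [Real.norm_eq_abs, abs_of_nonneg (by positivity)]
      exact mul_le_mul_of_nonneg_left (le_trans (le_of_eq (hnorm _)) (hM _)) hU
    have bound := key x
    have h2 : ENNReal.ofReal (∫ τ in t0..t1, U * ‖gradient f (X x τ)‖)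
        = ∫⁻ τ in Ioc t0 t1, ENNReal.ofReal (U * ‖gradient f (X x τ)‖) := by
      rw [intervalIntegral.integral_of_le ht.le]
      exact ofReal_integral_eq_lintegral_ofReal hψint (ae_of_all _ fun τ => by positivity)
    have h3 := cs_lintegral (volume.restrict (Ioc t0 t1))
      (fun τ => ENNReal.ofReal (U * ‖gradient f (X x τ)‖))
      (ENNReal.measurable_ofReal.comp_aemeasurable hψaem)
    rw [Measure.restrict_apply_univ, Real.volume_Ioc] at h3
    calc P x ≤ ENNReal.ofReal ((∫ τ in t0..t1, U * ‖gradient f (X x τ)‖) ^ 2) := by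
          refine ENNReal.ofReal_le_ofReal ?_
          rw [← sq_abs]
          exact pow_le_pow_left₀ (abs_nonneg _) bound 2
      _ = (∫⁻ τ in Ioc t0 t1, ENNReal.ofReal (U * ‖gradient f (X x τ)‖)) ^ 2 := by
          rw [ENNReal.ofReal_pow (le_trans (abs_nonneg _) bound), h2]
      _ ≤ ENNReal.ofReal (t1 - t0) *
          ∫⁻ τ in Ioc t0 t1, ENNReal.ofReal (U * ‖gradient f (X x τ)‖) ^ 2 := h3
      _ = ENNReal.ofReal (t1 - t0) * ENNReal.ofReal (U ^ 2) *
          ∫⁻ τ in Ioc t0 t1, G (X x τ) := by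
          rw [mul_assoc]
          congr 1
          rw [← lintegral_const_mul' _ _ ENNReal.ofReal_ne_top]
          refine lintegral_congr fun τ => ?_
          rw [← ENNReal.ofReal_pow (by positivity), ← ENNReal.ofReal_mul (sq_nonneg U)]
          congr 1
          ring
  -- integrate in x and use Fubini + measure preservation
  have hjoint : AEMeasurable
      (Function.uncurry fun (x : EuclideanSpace ℝ (Fin d)) (τ : ℝ) => G (X x τ))
      (volume.prod (volume.restrict (Ioc t0 t1))) :=
    ((hGm.comp hXm).aemeasurable)
  have main : ∫⁻ x, P x ≤ ENNReal.ofReal (t1 - t0) * ENNReal.ofReal (U ^ 2) *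
      (ENNReal.ofReal (t1 - t0) * K) := by
    calc ∫⁻ x, P x
        ≤ ∫⁻ x, ENNReal.ofReal (t1 - t0) * ENNReal.ofReal (U ^ 2) *
            ∫⁻ τ in Ioc t0 t1, G (X x τ) := lintegral_mono key2
      _ = ENNReal.ofReal (t1 - t0) * ENNReal.ofReal (U ^ 2) *
            ∫⁻ x, ∫⁻ τ in Ioc t0 t1, G (X x τ) :=
          lintegral_const_mul' _ _ (ENNReal.mul_ne_top ENNReal.ofReal_ne_top
            ENNReal.ofReal_ne_top)
      _ = ENNReal.ofReal (t1 - t0) * ENNReal.ofReal (U ^ 2) *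
            ∫⁻ τ in Ioc t0 t1, ∫⁻ x, G (X x τ) := by
          rw [lintegral_lintegral_swap hjoint]
      _ = ENNReal.ofReal (t1 - t0) * ENNReal.ofReal (U ^ 2) *
            ∫⁻ _ in Ioc t0 t1, K := by
          congr 1
          refine setLIntegral_congr_fun measurableSet_Ioc (fun τ hτ => ?_)
          exact (hX3 τ (Ioc_subset_Icc_self hτ)).lintegral_comp hGm
      _ = ENNReal.ofReal (t1 - t0) * ENNReal.ofReal (U ^ 2) *
            (ENNReal.ofReal (t1 - t0) * K) := by
          rw [setLIntegral_const, Real.volume_Ioc, mul_comm K]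
  -- convert the two Bochner integrals
  have hX0m : Measurable (fun x : EuclideanSpace ℝ (Fin d) => X x t0) :=
    hXm.comp (measurable_id.prodMk measurable_const)
  have hsm : Measurable (fun x : EuclideanSpace ℝ (Fin d) => (f (X x t0) - f x) ^ 2) :=
    ((hf.continuous.measurable.comp hX0m).sub hf.continuous.measurable).pow_const 2
  have hLHS : ∫ x, (f (X x t0) - f x) ^ 2 = (∫⁻ x, P x).toReal := by
    rw [integral_eq_lintegral_of_nonneg_ae (ae_of_all _ fun x => sq_nonneg _)
      hsm.aestronglyMeasurable]
  have hRHS : ∫ x, ‖gradient f x‖ ^ 2 = K.toReal := by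
    rw [integral_eq_lintegral_of_nonneg_ae (ae_of_all _ fun x => sq_nonneg _)
      ((hgradc.norm.pow 2).measurable).aestronglyMeasurable]
  rw [hLHS, hRHS]
  have hBfin : ENNReal.ofReal (t1 - t0) * ENNReal.ofReal (U ^ 2) *
      (ENNReal.ofReal (t1 - t0) * K) ≠ ⊤ :=
    ENNReal.mul_ne_top (ENNReal.mul_ne_top ENNReal.ofReal_ne_top ENNReal.ofReal_ne_top)
      (ENNReal.mul_ne_top ENNReal.ofReal_ne_top hKfin)
  have h5 := ENNReal.toReal_mono hBfin main
  have hΔ : (0:ℝ) ≤ t1 - t0 := by linarith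
  have hBtoReal : (ENNReal.ofReal (t1 - t0) * ENNReal.ofReal (U ^ 2) *
      (ENNReal.ofReal (t1 - t0) * K)).toReal
      = ((t1 - t0) * U) ^ 2 * K.toReal := by
    rw [ENNReal.toReal_mul, ENNReal.toReal_mul, ENNReal.toReal_mul,
      ENNReal.toReal_ofReal hΔ, ENNReal.toReal_ofReal (sq_nonneg U)]
    ring
  calc Real.sqrt ((∫⁻ x, P x).toReal)
      ≤ Real.sqrt (((t1 - t0) * U) ^ 2 * K.toReal) := by
        refine Real.sqrt_le_sqrt ?_
        rw [← hBtoReal]; exact h5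
    _ = (t1 - t0) * U * Real.sqrt K.toReal := by
        rw [Real.sqrt_mul (sq_nonneg _), Real.sqrt_sq (mul_nonneg hΔ hU)]
end

section
/- Let H be a real Hilbert space, V ⊆ H a closed subspace, and P : H → H the orthogonal projection onto V. Let N ≥ 1 and let e₀, e₁, …, e_N ∈ H and f₀, …, f_{N−1} ∈ H satisfy, for every 1 ≤ n ≤ N: ⟨eₙ − fₙ₋₁, v⟩ = 0 for all v ∈ V, and ‖fₙ₋₁‖ = ‖eₙ₋₁‖. Then ‖e_N‖² + (1/2)·Σ_{n=1}^{N} ‖eₙ − fₙ₋₁‖² ≤ ‖e₀‖² + 2·Σ_{n=1}^{N} ‖eₙ − P eₙ‖². -/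
open RealInnerProductSpace Finset

theorem lg_telescope_aux (g : ℕ → ℝ) (N : ℕ) :
    ∑ n ∈ Finset.Icc 1 N, (g n - g (n - 1)) = g N - g 0 := by
  induction N with
  | zero => simp
  | succ k ih =>
    rw [Finset.sum_Icc_succ_top (by omega), ih]
    simp

/-- **First-stage error inequality for the conventional LG method.**
If `⟨eₙ − fₙ₋₁, v⟩ = 0` for all `v ∈ V` and `‖fₙ₋₁‖ = ‖eₙ₋₁‖` for `1 ≤ n ≤ N`, then
`‖e_N‖² + (1/2)Σ‖eₙ − fₙ₋₁‖² ≤ ‖e₀‖² + 2Σ‖eₙ − P eₙ‖²`. -/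
theorem lg_first_stage_error_inequality
    {H : Type*} [NormedAddCommGroup H] [InnerProductSpace ℝ H] [CompleteSpace H]
    (V : Submodule ℝ H) (hV : IsClosed (V : Set H)) [V.HasOrthogonalProjection]
    (N : ℕ) (hN : 1 ≤ N) (e f : ℕ → H)
    (horth : ∀ n ∈ Finset.Icc 1 N, ∀ v ∈ V, ⟪e n - f (n - 1), v⟫ = 0)
    (hiso : ∀ n ∈ Finset.Icc 1 N, ‖f (n - 1)‖ = ‖e (n - 1)‖) :
    ‖e N‖ ^ 2 + (1 / 2) * ∑ n ∈ Finset.Icc 1 N, ‖e n - f (n - 1)‖ ^ 2 ≤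
      ‖e 0‖ ^ 2 + 2 * ∑ n ∈ Finset.Icc 1 N, ‖e n - (V.orthogonalProjectionOnto (e n) : H)‖ ^ 2 := by
  have key : ∀ n ∈ Finset.Icc 1 N,
      ‖e n‖ ^ 2 - ‖e (n - 1)‖ ^ 2 + (1 / 2) * ‖e n - f (n - 1)‖ ^ 2 ≤
        2 * ‖e n - (V.orthogonalProjectionOnto (e n) : H)‖ ^ 2 := by
    intro n hn
    set a := e n
    set b := f (n - 1)
    set p : H := (V.orthogonalProjectionOnto a : H)
    have hip : ⟪a - b, p⟫ = 0 := horth n hn p (V.orthogonalProjectionOnto a).2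
    have hinner : ⟪a - b, a⟫ = ⟪a - b, a - p⟫ := by
      rw [inner_sub_right, hip]; ring
    have hcs : ⟪a - b, a - p⟫ ≤ ‖a - b‖ * ‖a - p‖ := real_inner_le_norm _ _
    have hid : 2 * ⟪a - b, a⟫ = ‖a‖ ^ 2 + ‖a - b‖ ^ 2 - ‖b‖ ^ 2 := by
      have h1 : ‖a - b‖ ^ 2 = ‖a‖ ^ 2 - 2 * ⟪a, b⟫ + ‖b‖ ^ 2 := norm_sub_sq_real a b
      have h2 : ⟪a - b, a⟫ = ⟪a, a⟫ - ⟪b, a⟫ := inner_sub_left a b a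
      have h3 : ⟪a, a⟫ = ‖a‖ ^ 2 := real_inner_self_eq_norm_sq a
      have h4 : ⟪a, b⟫ = ⟪b, a⟫ := real_inner_comm b a
      nlinarith [h1, h2, h3, h4]
    have hb : ‖b‖ ^ 2 = ‖e (n - 1)‖ ^ 2 := by rw [hiso n hn]
    have hmain : ‖a‖ ^ 2 + ‖a - b‖ ^ 2 - ‖b‖ ^ 2 ≤ 2 * (‖a - b‖ * ‖a - p‖) := by
      rw [← hid, hinner]; linarith
    nlinarith [hmain, hb, sq_nonneg (‖a - b‖ - 2 * ‖a - p‖)]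
  have hsum := Finset.sum_le_sum key
  have htel := lg_telescope_aux (fun n => ‖e n‖ ^ 2) N
  rw [Finset.sum_add_distrib, htel, ← Finset.mul_sum, ← Finset.mul_sum] at hsum
  linarith [hsum]
end

section
/- Let H be a real Hilbert space and V ⊆ H a closed subspace. Let Δt > 0, N ≥ 1, let θ₀, θ₁, …, θ_N ∈ V, and let f₀, …, f_{N−1} ∈ H and δ₁, …, δ_N ∈ H satisfy, for every 1 ≤ n ≤ N: ⟨θₙ − fₙ₋₁, v⟩ = −⟨δₙ, v⟩ for all v ∈ V, and ‖fₙ₋₁‖ = ‖θₙ₋₁‖. Then ‖θ_N‖² + Σ_{n=1}^{N} ‖θₙ − fₙ₋₁‖² ≤ ‖θ₀‖² + (2/Δt)·Σ_{n=1}^{N} ‖δₙ‖² + (Δt/2)·Σ_{n=1}^{N} ‖θₙ‖². -/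
open RealInnerProductSpace Finset

/-- **Second-stage recursion inequality for the conventional LG method.**
If `θₙ ∈ V`, `⟨θₙ − fₙ₋₁, v⟩ = −⟨δₙ, v⟩` for all `v ∈ V`, and `‖fₙ₋₁‖ = ‖θₙ₋₁‖`
for `1 ≤ n ≤ N`, then
`‖θ_N‖² + Σ‖θₙ − fₙ₋₁‖² ≤ ‖θ₀‖² + (2/Δt)Σ‖δₙ‖² + (Δt/2)Σ‖θₙ‖²`. -/
theorem lg_second_stage_recursion_inequality
    {H : Type*} [NormedAddCommGroup H] [InnerProductSpace ℝ H] [CompleteSpace H]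
    (V : Submodule ℝ H) (hV : IsClosed (V : Set H))
    (Δt : ℝ) (hΔt : 0 < Δt) (N : ℕ) (hN : 1 ≤ N)
    (θ f δ : ℕ → H) (hθV : ∀ n ≤ N, θ n ∈ V)
    (herr : ∀ n ∈ Finset.Icc 1 N, ∀ v ∈ V, ⟪θ n - f (n - 1), v⟫ = -⟪δ n, v⟫)
    (hiso : ∀ n ∈ Finset.Icc 1 N, ‖f (n - 1)‖ = ‖θ (n - 1)‖) :
    ‖θ N‖ ^ 2 + ∑ n ∈ Finset.Icc 1 N, ‖θ n - f (n - 1)‖ ^ 2 ≤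
      ‖θ 0‖ ^ 2 + (2 / Δt) * ∑ n ∈ Finset.Icc 1 N, ‖δ n‖ ^ 2 +
        (Δt / 2) * ∑ n ∈ Finset.Icc 1 N, ‖θ n‖ ^ 2 := by
  have key : ∀ n ∈ Finset.Icc 1 N,
      (‖θ n‖ ^ 2 - ‖θ (n - 1)‖ ^ 2) + ‖θ n - f (n - 1)‖ ^ 2 ≤
        (2 / Δt) * ‖δ n‖ ^ 2 + (Δt / 2) * ‖θ n‖ ^ 2 := by
    intro n hn
    have hnN : n ≤ N := (Finset.mem_Icc.mp hn).2
    have hinner : ⟪θ n - f (n - 1), θ n⟫ = -⟪δ n, θ n⟫ :=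
      herr n hn (θ n) (hθV n hnN)
    have hnorm2 : ‖f (n - 1)‖ ^ 2 = ‖θ (n - 1)‖ ^ 2 := by rw [hiso n hn]
    have hexp : ‖θ n - f (n - 1)‖ ^ 2
        = ‖θ n‖ ^ 2 - 2 * ⟪θ n, f (n - 1)⟫ + ‖f (n - 1)‖ ^ 2 :=
      norm_sub_sq_real _ _
    have hin : ⟪θ n - f (n - 1), θ n⟫ = ‖θ n‖ ^ 2 - ⟪θ n, f (n - 1)⟫ := by
      rw [inner_sub_left, real_inner_self_eq_norm_sq, real_inner_comm]
    have hcs : -⟪δ n, θ n⟫ ≤ ‖δ n‖ * ‖θ n‖ :=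
      le_trans (neg_le_abs _) (abs_real_inner_le_norm _ _)
    have hy : 2 * (‖δ n‖ * ‖θ n‖) ≤ (2 / Δt) * ‖δ n‖ ^ 2 + (Δt / 2) * ‖θ n‖ ^ 2 := by
      rw [← sub_nonneg]
      have heq : (2 / Δt) * ‖δ n‖ ^ 2 + (Δt / 2) * ‖θ n‖ ^ 2 - 2 * (‖δ n‖ * ‖θ n‖)
          = (2 * ‖δ n‖ - Δt * ‖θ n‖) ^ 2 / (2 * Δt) := by
        field_simp
        ring
      rw [heq]
      positivity
    linarith [hy, hcs, hinner, hexp, hin, hnorm2]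
  have hsum := Finset.sum_le_sum key
  have htel : ∀ M : ℕ, ∑ n ∈ Finset.Icc 1 M, (‖θ n‖ ^ 2 - ‖θ (n - 1)‖ ^ 2)
      = ‖θ M‖ ^ 2 - ‖θ 0‖ ^ 2 := by
    intro M
    induction M with
    | zero => simp
    | succ M ih =>
        rw [Finset.sum_Icc_succ_top (Nat.succ_le_succ (Nat.zero_le M)), ih]
        simp
  rw [Finset.sum_add_distrib, htel, Finset.sum_add_distrib,
    ← Finset.mul_sum, ← Finset.mul_sum] at hsum
  linarith
end

section
/- Let H be a real Hilbert space, V ⊆ H a closed subspace with orthogonal projection P, and T₁, …, T_N : H → H linear isometries. Let Δt ∈ (0,1], N ≥ 1, and set T := N·Δt. Let c₀, …, c_N ∈ H satisfy cₙ = Tₙ cₙ₋₁ for 1 ≤ n ≤ N, and let c_h⁰, …, c_h^N ∈ V satisfy c_hⁿ = P(Tₙ c_h^{n−1}) for 1 ≤ n ≤ N. Assume there are constants A, B ≥ 0 such that ‖cₙ − P cₙ‖ ≤ A for all 0 ≤ n ≤ N, and ‖Tₙ(cₙ₋₁ − P cₙ₋₁) − (cₙ₋₁ − P cₙ₋₁)‖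 ≤ Δt·B for all 1 ≤ n ≤ N. Then there exists a constant C, depending only on T (and not on Δt, N, A, B, H, V), such that ‖c_N − c_h^N‖ ≤ C·( ‖c₀ − c_h⁰‖ + A + min(A/Δt^{1/2}, B) ). -/
open Finset

universe u

private lemma lg_sq_le_add_sq {x a b : ℝ} (hx : 0 ≤ x) (ha : 0 ≤ a) (hb : 0 ≤ b)
    (h : x ^ 2 ≤ a ^ 2 + b ^ 2) : x ≤ a + b := by
  have h2 : x ^ 2 ≤ (a + b) ^ 2 := by nlinarith [mul_nonneg ha hb]
  calc x = Real.sqrt (x ^ 2) := (Real.sqrt_sq hx).symm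
    _ ≤ Real.sqrt ((a + b) ^ 2) := Real.sqrt_le_sqrt h2
    _ = a + b := Real.sqrt_sq (by linarith)

/-- **Abstract form of the new error estimate for the conventional LG method (Theorem 3.1).**
There is a constant `C`, depending only on the final time `Tfin = N·Δt`, such that the
Lagrange–Galerkin error satisfies
`‖c_N − c_h^N‖ ≤ C (‖c₀ − c_h⁰‖ + A + min (A/√Δt) B)`. -/
theorem lg_abstract_error_estimate (Tfin : ℝ) :
    ∃ C : ℝ, ∀ (H : Type u) [NormedAddCommGroup H] [InnerProductSpace ℝ H] [CompleteSpace H]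
      (V : Submodule ℝ H) (_hV : IsClosed (V : Set H)) [Submodule.HasOrthogonalProjection V]
      (T : ℕ → H →ₗᵢ[ℝ] H) (Δt : ℝ) (N : ℕ) (c ch : ℕ → H) (A B : ℝ),
      0 < Δt → Δt ≤ 1 → 1 ≤ N → (N : ℝ) * Δt = Tfin →
      (∀ n ∈ Finset.Icc 1 N, c n = T n (c (n - 1))) →
      ch 0 ∈ V →
      (∀ n ∈ Finset.Icc 1 N, ch n = (Submodule.orthogonalProjectionOnto V (T n (ch (n - 1))) : H)) →
      0 ≤ A → 0 ≤ B →
      (∀ n ≤ N, ‖c n - (Submodule.orthogonalProjectionOnto V (c n) : H)‖ ≤ A) →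
      (∀ n ∈ Finset.Icc 1 N,
        ‖T n (c (n - 1) - (Submodule.orthogonalProjectionOnto V (c (n - 1)) : H)) -
            (c (n - 1) - (Submodule.orthogonalProjectionOnto V (c (n - 1)) : H))‖ ≤ Δt * B) →
      ‖c N - ch N‖ ≤ C * (‖c 0 - ch 0‖ + A + min (A / Real.sqrt Δt) B) := by
  classical
  refine ⟨1 + max Tfin (Real.sqrt Tfin), ?_⟩
  intro H _ _ _ V _hV _ T Δt N c ch A B hΔt hΔt1 hN hT hc hch0 hch hA0 hB0 hA hB
  -- notation
  set P : H → H := fun x => (Submodule.orthogonalProjectionOnto V x : H) with hPdef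
  have hPlin : ∀ x y : H, P (x - y) = P x - P y := by
    intro x y; simp [hPdef, map_sub]
  have hPnorm : ∀ x : H, ‖P x‖ ≤ ‖x‖ := by
    intro x
    have h1 : ‖Submodule.orthogonalProjectionOnto V x‖ ≤ ‖Submodule.orthogonalProjectionOnto V‖ * ‖x‖ :=
      (Submodule.orthogonalProjectionOnto V).le_opNorm x
    have h2 : ‖Submodule.orthogonalProjectionOnto V‖ ≤ 1 := Submodule.orthogonalProjectionOnto_norm_le V
    have : ‖P x‖ = ‖Submodule.orthogonalProjectionOnto V x‖ := rfl
    nlinarith [norm_nonneg x]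
  set η : ℕ → H := fun n => c n - P (c n) with hηdef
  set e : ℕ → H := fun n => P (c n) - ch n with hedef
  have hηmem : ∀ n, η n ∈ Vᗮ := fun n => Submodule.sub_starProjection_mem_orthogonal (c n)
  have hPη : ∀ n, P (η n) = 0 := by
    intro n
    have := Submodule.orthogonalProjectionOnto_apply_of_mem_orthogonal (hηmem n)
    show ((Submodule.orthogonalProjectionOnto V (η n) : H)) = 0
    rw [this]; rfl
  have hchmem : ∀ n ≤ N, ch n ∈ V := by
    intro n hn
    rcases Nat.eq_zero_or_pos n with h0 | h1
    · exact h0 ▸ hch0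
    · rw [hch n (Finset.mem_Icc.2 ⟨h1, hn⟩)]; exact (Submodule.orthogonalProjectionOnto V _).2
  have hemem : ∀ n ≤ N, e n ∈ V := by
    intro n hn
    exact Submodule.sub_mem V (Submodule.orthogonalProjectionOnto V (c n)).2 (hchmem n hn)
  -- key recurrence: e n = P (T n (η (n-1) + e (n-1)))
  have hkey : ∀ n ∈ Finset.Icc 1 N, e n = P (T n (η (n - 1) + e (n - 1))) := by
    intro n hn
    have hsplit : T n (η (n - 1) + e (n - 1)) = c n - T n (ch (n - 1)) := by
      rw [hc n hn]
      rw [← map_sub]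
      congr 1
      simp [hηdef, hedef]
    rw [hsplit, hPlin]
    have : P (T n (ch (n - 1))) = ch n := (hch n hn).symm
    rw [this]
  -- bound via B
  have hrecB : ∀ n ∈ Finset.Icc 1 N, ‖e n‖ ≤ ‖e (n - 1)‖ + Δt * B := by
    intro n hn
    have h1 : e n = P (T n (η (n - 1)) - η (n - 1)) + P (T n (e (n - 1))) := by
      rw [hkey n hn]
      have : T n (η (n - 1) + e (n - 1)) = (T n (η (n - 1)) - η (n - 1)) + (η (n - 1) + T n (e (n - 1))) := by
        rw [map_add]; abel
      rw [this]
      have hadd : ∀ x y : H, P (x + y) = P x + P y := by intro x y; simp [hPdef, map_add]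
      rw [hadd, hadd, hPη]
      abel
    calc ‖e n‖ ≤ ‖P (T n (η (n - 1)) - η (n - 1))‖ + ‖P (T n (e (n - 1)))‖ := by
          rw [h1]; exact norm_add_le _ _
      _ ≤ ‖T n (η (n - 1)) - η (n - 1)‖ + ‖T n (e (n - 1))‖ :=
          add_le_add (hPnorm _) (hPnorm _)
      _ ≤ Δt * B + ‖e (n - 1)‖ := by
          rw [(T n).norm_map]
          exact add_le_add_left (hB n hn) _
      _ = ‖e (n - 1)‖ + Δt * B := by ring
  -- bound via A (squared)
  have hrecA : ∀ n ∈ Finset.Icc 1 N, ‖e n‖ ^ 2 ≤ ‖e (n - 1)‖ ^ 2 + A ^ 2 := by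
    intro n hn
    have hmem := Finset.mem_Icc.1 hn
    have h1 : ‖e n‖ ≤ ‖e (n - 1) + η (n - 1)‖ := by
      rw [hkey n hn]
      refine (hPnorm _).trans ?_
      rw [(T n).norm_map]
      rw [show η (n - 1) + e (n - 1) = e (n - 1) + η (n - 1) by abel]
    have hinner : (inner ℝ (e (n - 1)) (η (n - 1)) : ℝ) = 0 := by
      have h1le : n - 1 ≤ N := le_trans (Nat.sub_le n 1) hmem.2
      exact (hηmem (n - 1)) _ (hemem (n - 1) h1le)
    have hsq : ‖e (n - 1) + η (n - 1)‖ ^ 2 = ‖e (n - 1)‖ ^ 2 + ‖η (n - 1)‖ ^ 2 := by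
      rw [norm_add_sq_real, hinner]; ring
    have hηA : ‖η (n - 1)‖ ≤ A := hA (n - 1) (le_trans (Nat.sub_le n 1) hmem.2)
    nlinarith [norm_nonneg (e n), norm_nonneg (η (n - 1)), norm_nonneg (e (n - 1) + η (n - 1))]
  -- induction
  have hind : ∀ n, n ≤ N →
      ‖e n‖ ≤ ‖e 0‖ + n * (Δt * B) ∧ ‖e n‖ ^ 2 ≤ ‖e 0‖ ^ 2 + n * A ^ 2 := by
    intro n
    induction n with
    | zero => intro _; simp
    | succ k ih =>
      intro hk
      have hk' : k ≤ N := Nat.le_of_succ_le hk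
      obtain ⟨ih1, ih2⟩ := ih hk'
      have hmem : k + 1 ∈ Finset.Icc 1 N := Finset.mem_Icc.2 ⟨Nat.succ_le_succ (Nat.zero_le k), hk⟩
      have hsub : k + 1 - 1 = k := rfl
      constructor
      · have := hrecB (k + 1) hmem
        rw [hsub] at this
        push_cast
        nlinarith [mul_nonneg hΔt.le hB0]
      · have := hrecA (k + 1) hmem
        rw [hsub] at this
        push_cast
        nlinarith [sq_nonneg A]
  obtain ⟨hlin, hsq⟩ := hind N le_rfl
  have hTpos : 0 < Tfin := hT ▸ mul_pos (by exact_mod_cast hN) hΔt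
  -- bound 1 : ‖e N‖ ≤ ‖e 0‖ + Tfin * B
  have hbound1 : ‖e N‖ ≤ ‖e 0‖ + Tfin * B := by
    have : (N : ℝ) * (Δt * B) = Tfin * B := by rw [← hT]; ring
    linarith [hlin, this.symm.le, this.le]
  -- bound 2 : ‖e N‖ ≤ ‖e 0‖ + Real.sqrt Tfin * (A / Real.sqrt Δt)
  have hsqrtΔt : 0 < Real.sqrt Δt := Real.sqrt_pos.2 hΔt
  have hbound2 : ‖e N‖ ≤ ‖e 0‖ + Real.sqrt Tfin * (A / Real.sqrt Δt) := by
    have hNr : (N : ℝ) = Tfin / Δt := by field_simp [← hT]; exact hT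
    have hsN : Real.sqrt (N : ℝ) = Real.sqrt Tfin / Real.sqrt Δt := by
      rw [hNr, Real.sqrt_div hTpos.le]
    have hsNA : Real.sqrt (N : ℝ) * A = Real.sqrt Tfin * (A / Real.sqrt Δt) := by
      rw [hsN]; ring
    have hs2 : (Real.sqrt (N : ℝ)) ^ 2 = (N : ℝ) := Real.sq_sqrt (Nat.cast_nonneg N)
    have hb2 : (Real.sqrt (N : ℝ) * A) ^ 2 = (N : ℝ) * A ^ 2 := by
      rw [mul_pow, hs2]
    have h2 : ‖e N‖ ≤ ‖e 0‖ + Real.sqrt (N : ℝ) * A := by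
      refine lg_sq_le_add_sq (norm_nonneg _) (norm_nonneg _)
        (mul_nonneg (Real.sqrt_nonneg _) hA0) ?_
      rw [hb2]; exact hsq
    rw [← hsNA]; exact h2
  -- ‖e 0‖ ≤ ‖c 0 - ch 0‖
  have he0 : ‖e 0‖ ≤ ‖c 0 - ch 0‖ := by
    have hPch0 : P (ch 0) = ch 0 := Submodule.starProjection_eq_self_iff.2 hch0
    have : e 0 = P (c 0 - ch 0) := by rw [hPlin, hPch0]
    rw [this]; exact hPnorm _
  -- final assembly
  have hηN : ‖η N‖ ≤ A := hA N le_rfl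
  have hfin : ‖c N - ch N‖ ≤ ‖η N‖ + ‖e N‖ := by
    have : c N - ch N = η N + e N := by simp [hηdef, hedef]
    rw [this]; exact norm_add_le _ _
  have hAd : 0 ≤ A / Real.sqrt Δt := div_nonneg hA0 hsqrtΔt.le
  set M := max Tfin (Real.sqrt Tfin) with hM
  have hM0 : 0 ≤ M := le_trans hTpos.le (le_max_left _ _)
  have hmin : min (Real.sqrt Tfin * (A / Real.sqrt Δt)) (Tfin * B) ≤
      M * min (A / Real.sqrt Δt) B := by
    rcases le_total (A / Real.sqrt Δt) B with h | h
    · rw [min_eq_left h]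
      refine le_trans (min_le_left _ _) ?_
      exact mul_le_mul_of_nonneg_right (le_max_right _ _) hAd
    · rw [min_eq_right h]
      refine le_trans (min_le_right _ _) ?_
      exact mul_le_mul_of_nonneg_right (le_max_left _ _) hB0
  have heN : ‖e N‖ ≤ ‖e 0‖ + M * min (A / Real.sqrt Δt) B := by
    have := le_min hbound2 hbound1
    have h2 : min (‖e 0‖ + Real.sqrt Tfin * (A / Real.sqrt Δt)) (‖e 0‖ + Tfin * B)
        = ‖e 0‖ + min (Real.sqrt Tfin * (A / Real.sqrt Δt)) (Tfin * B) := by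
      rw [min_add_add_left]
    rw [h2] at this
    linarith [hmin]
  have hminnn : 0 ≤ min (A / Real.sqrt Δt) B := le_min hAd hB0
  have : ‖c N - ch N‖ ≤ ‖c 0 - ch 0‖ + A + M * min (A / Real.sqrt Δt) B := by
    linarith [hfin, hηN, heN, he0]
  have hnn0 : 0 ≤ ‖c 0 - ch 0‖ := norm_nonneg _
  have hexp : (1 + M) * (‖c 0 - ch 0‖ + A + min (A / Real.sqrt Δt) B)
      = (‖c 0 - ch 0‖ + A + M * min (A / Real.sqrt Δt) B)
        + (M * ‖c 0 - ch 0‖ + M * A + min (A / Real.sqrt Δt) B) := by ring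
  linarith [mul_nonneg hM0 hnn0, mul_nonneg hM0 hA0]
end

section
/- Let H be a real Hilbert space, V ⊆ H a closed subspace, T₁, …, T_N : H → H linear isometries, Δt > 0, and S : H × H → ℝ a bilinear form with S(w,w) ≥ 0 for all w ∈ H. Let c_h⁰ ∈ V and, for 1 ≤ n ≤ N, let c_hⁿ ∈ V satisfy ⟨c_hⁿ − Tₙ c_h^{n−1}, v⟩ + Δt·S(c_hⁿ, v) = 0 for all v ∈ V. Then ‖c_h^N‖² + Δt·Σ_{n=1}^{N} S(c_hⁿ, c_hⁿ) + Σ_{n=1}^{N} ‖c_hⁿ − Tₙ c_h^{n−1}‖² ≤ ‖c_h⁰‖². -/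
open RealInnerProductSpace Finset

/-- **Stability of the LPS-LG method (Lemma 4.1).**
If `S` is a nonnegative bilinear form, the `Tₙ` are linear isometries, and
`⟨c_hⁿ − Tₙ c_h^{n−1}, v⟩ + Δt·S(c_hⁿ, v) = 0` for all `v ∈ V`, then
`‖c_h^N‖² + Δt·Σ S(c_hⁿ,c_hⁿ) + Σ‖c_hⁿ − Tₙ c_h^{n−1}‖² ≤ ‖c_h⁰‖²`. -/
theorem lps_lg_stability
    {H : Type*} [NormedAddCommGroup H] [InnerProductSpace ℝ H] [CompleteSpace H]
    (V : Submodule ℝ H) (hV : IsClosed (V : Set H))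
    (N : ℕ) (T : ℕ → H →ₗᵢ[ℝ] H) (Δt : ℝ) (hΔt : 0 < Δt)
    (S : H →ₗ[ℝ] H →ₗ[ℝ] ℝ) (hS : ∀ w, 0 ≤ S w w)
    (ch : ℕ → H) (hch0 : ch 0 ∈ V) (hchV : ∀ n ∈ Finset.Icc 1 N, ch n ∈ V)
    (hscheme : ∀ n ∈ Finset.Icc 1 N, ∀ v ∈ V,
      ⟪ch n - T n (ch (n - 1)), v⟫ + Δt * S (ch n) v = 0) :
    ‖ch N‖ ^ 2 + Δt * ∑ n ∈ Finset.Icc 1 N, S (ch n) (ch n) +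
        ∑ n ∈ Finset.Icc 1 N, ‖ch n - T n (ch (n - 1))‖ ^ 2 ≤ ‖ch 0‖ ^ 2 := by
  induction N with
  | zero => simp
  | succ n ih =>
    have hsub : Finset.Icc 1 n ⊆ Finset.Icc 1 (n + 1) := by
      apply Finset.Icc_subset_Icc_right; omega
    have IH := ih (fun k hk => hchV k (hsub hk)) (fun k hk => hscheme k (hsub hk))
    have hmem : n + 1 ∈ Finset.Icc 1 (n + 1) := by simp
    have hkey := hscheme (n + 1) hmem (ch (n + 1)) (hchV (n + 1) hmem)
    have hT : ‖(T (n + 1)) (ch (n + 1 - 1))‖ = ‖ch (n + 1 - 1)‖ := (T (n + 1)).norm_map _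
    have hnsq : ‖ch (n + 1) - T (n + 1) (ch (n + 1 - 1))‖ ^ 2
        = ‖ch (n + 1)‖ ^ 2 - 2 * ⟪ch (n + 1), T (n + 1) (ch (n + 1 - 1))⟫ + ‖ch (n + 1 - 1)‖ ^ 2 := by
      rw [← hT]; exact norm_sub_sq_real _ _
    have hinner : ⟪ch (n + 1) - T (n + 1) (ch (n + 1 - 1)), ch (n + 1)⟫
        = ‖ch (n + 1)‖ ^ 2 - ⟪ch (n + 1), T (n + 1) (ch (n + 1 - 1))⟫ := by
      rw [inner_sub_left, real_inner_self_eq_norm_sq, real_inner_comm]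
    have hstep : ‖ch (n + 1)‖ ^ 2 + Δt * S (ch (n + 1)) (ch (n + 1))
        + ‖ch (n + 1) - T (n + 1) (ch (n + 1 - 1))‖ ^ 2 ≤ ‖ch n‖ ^ 2 := by
      have hSn := hS (ch (n + 1))
      have hn1 : n + 1 - 1 = n := by omega
      rw [hn1] at hnsq hkey hinner ⊢
      linarith [mul_nonneg hΔt.le hSn]
    rw [Finset.sum_Icc_succ_top (by omega : 1 ≤ n + 1),
        Finset.sum_Icc_succ_top (by omega : 1 ≤ n + 1)]
    nlinarith [hS (ch (n + 1)), hstep, IH]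
end

section
/- Let H be a real Hilbert space, V ⊆ H a closed subspace with orthogonal projection P, Δt > 0, N ≥ 1, and let S : H × H → ℝ be a symmetric bilinear form with S(w,w) ≥ 0 for all w ∈ H. Let c₁, …, c_N ∈ H, e₀, …, e_N ∈ H, and f₀, …, f_{N−1} ∈ H satisfy, for each 1 ≤ n ≤ N: (i) ⟨eₙ − fₙ₋₁, v⟩ + Δt·S(eₙ, v) = Δt·S(cₙ, v) for all v ∈ V; and (ii) ‖fₙ₋₁‖ = ‖eₙ₋₁‖. Set ρₙ := eₙ − P eₙ. Then ‖e_N‖² + (1/2)·Σ_{n=1}^{N} ‖eₙ − fₙ₋₁‖² + Δt·Σ_{n=1}^{N} S(eₙ, eₙ) ≤ ‖e₀‖² + Σ_{n=1}^{N} ( 2‖ρₙ‖² + 3Δt·( S(cₙ,cₙ) + S(ρₙ,ρₙ) ) ). -/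
open RealInnerProductSpace Finset

private lemma cs_quarter {H : Type*} [NormedAddCommGroup H] [InnerProductSpace ℝ H]
    (S : H →ₗ[ℝ] H →ₗ[ℝ] ℝ) (hSsymm : ∀ w z, S w z = S z w) (hSpos : ∀ w, 0 ≤ S w w)
    (a b : H) : S a b ≤ S a a + (1/4) * S b b := by
  have h := hSpos ((2:ℝ) • a - b)
  simp only [map_sub, map_smul, LinearMap.sub_apply, LinearMap.smul_apply, smul_eq_mul] at h
  have hs := hSsymm a b
  linarith

private lemma cs_half {H : Type*} [NormedAddCommGroup H] [InnerProductSpace ℝ H]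
    (S : H →ₗ[ℝ] H →ₗ[ℝ] ℝ) (hSsymm : ∀ w z, S w z = S z w) (hSpos : ∀ w, 0 ≤ S w w)
    (a b : H) : -(S a b) ≤ (1/2) * (S a a + S b b) := by
  have h := hSpos (a + b)
  simp only [map_add, LinearMap.add_apply] at h
  have hs := hSsymm a b
  linarith

private lemma step_ineq {H : Type*} [NormedAddCommGroup H] [InnerProductSpace ℝ H]
    [CompleteSpace H] (V : Submodule ℝ H) [V.HasOrthogonalProjection]
    (Δt : ℝ) (hΔt : 0 < Δt)
    (S : H →ₗ[ℝ] H →ₗ[ℝ] ℝ) (hSsymm : ∀ w z, S w z = S z w) (hSpos : ∀ w, 0 ≤ S w w)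
    (cn en fn : H)
    (herr : ∀ v ∈ V, ⟪en - fn, v⟫ + Δt * S en v = Δt * S cn v) :
    ‖en‖ ^ 2 - ‖fn‖ ^ 2 + (1/2) * ‖en - fn‖ ^ 2 + Δt * S en en ≤
      2 * ‖en - (V.orthogonalProjectionOnto en : H)‖ ^ 2 +
      3 * Δt * (S cn cn + S (en - (V.orthogonalProjectionOnto en : H))
        (en - (V.orthogonalProjectionOnto en : H))) := by
  set θ : H := (V.orthogonalProjectionOnto en : H) with hθ
  set ρ : H := en - θ with hρ
  have h := herr θ (V.orthogonalProjectionOnto en).2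
  have hθρ : θ = en - ρ := by rw [hρ]; abel
  rw [hθρ] at h
  simp only [inner_sub_right, map_sub, LinearMap.sub_apply] at h
  -- h : ⟪en - fn, en⟫ - ⟪en - fn, ρ⟫ + Δt * (S en en - S en ρ) = Δt * (S cn en - S cn ρ)
  have hA : ⟪en - fn, en⟫ = (‖en‖ ^ 2 - ‖fn‖ ^ 2 + ‖en - fn‖ ^ 2) / 2 := by
    have h1 : ‖en - fn‖ ^ 2 = ‖en‖ ^ 2 - 2 * ⟪en, fn⟫ + ‖fn‖ ^ 2 := norm_sub_sq_real en fn
    have h2 : ⟪en - fn, en⟫ = ⟪en, en⟫ - ⟪fn, en⟫ := inner_sub_left _ _ _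
    have h3 : ⟪en, en⟫ = ‖en‖ ^ 2 := real_inner_self_eq_norm_sq en
    have h4 : ⟪fn, en⟫ = ⟪en, fn⟫ := real_inner_comm _ _
    linarith
  have hB : ⟪en - fn, ρ⟫ ≤ (1/4) * ‖en - fn‖ ^ 2 + ‖ρ‖ ^ 2 := by
    have := real_inner_le_norm (en - fn) ρ
    nlinarith [norm_nonneg (en - fn), norm_nonneg ρ, sq_nonneg (‖en - fn‖ - 2 * ‖ρ‖)]
  have hC : S en ρ ≤ (1/4) * S en en + S ρ ρ := by
    have := cs_quarter S hSsymm hSpos ρ en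
    have hs := hSsymm ρ en; linarith
  have hD : S cn en ≤ S cn cn + (1/4) * S en en := cs_quarter S hSsymm hSpos cn en
  have hE : -(S cn ρ) ≤ (1/2) * (S cn cn + S ρ ρ) := cs_half S hSsymm hSpos cn ρ
  nlinarith [mul_le_mul_of_nonneg_left hC hΔt.le, mul_le_mul_of_nonneg_left hD hΔt.le,
    mul_le_mul_of_nonneg_left hE hΔt.le]

private lemma summed {H : Type*} [NormedAddCommGroup H] [InnerProductSpace ℝ H]
    [CompleteSpace H] (V : Submodule ℝ H) [V.HasOrthogonalProjection]
    (Δt : ℝ) (hΔt : 0 < Δt)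
    (S : H →ₗ[ℝ] H →ₗ[ℝ] ℝ) (hSsymm : ∀ w z, S w z = S z w) (hSpos : ∀ w, 0 ≤ S w w)
    (c e f : ℕ → H) : ∀ N : ℕ,
    (∀ n ∈ Finset.Icc 1 N, ∀ v ∈ V,
      ⟪e n - f (n - 1), v⟫ + Δt * S (e n) v = Δt * S (c n) v) →
    (∀ n ∈ Finset.Icc 1 N, ‖f (n - 1)‖ = ‖e (n - 1)‖) →
    ‖e N‖ ^ 2 + (1 / 2) * ∑ n ∈ Finset.Icc 1 N, ‖e n - f (n - 1)‖ ^ 2 +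
        Δt * ∑ n ∈ Finset.Icc 1 N, S (e n) (e n) ≤
      ‖e 0‖ ^ 2 + ∑ n ∈ Finset.Icc 1 N,
        (2 * ‖e n - (V.orthogonalProjectionOnto (e n) : H)‖ ^ 2 +
          3 * Δt * (S (c n) (c n) +
            S (e n - (V.orthogonalProjectionOnto (e n) : H))
              (e n - (V.orthogonalProjectionOnto (e n) : H)))) := by
  intro N
  induction N with
  | zero => intro _ _; simp
  | succ N ih =>
    intro herr hiso
    have hsub : Finset.Icc 1 N ⊆ Finset.Icc 1 (N + 1) := by
      apply Finset.Icc_subset_Icc_right; omega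
    have IH := ih (fun n hn => herr n (hsub hn)) (fun n hn => hiso n (hsub hn))
    have hmem : N + 1 ∈ Finset.Icc 1 (N + 1) := by simp
    have hstep := step_ineq V Δt hΔt S hSsymm hSpos (c (N+1)) (e (N+1)) (f N)
      (by have := herr (N+1) hmem; simpa using this)
    have hf : ‖f N‖ = ‖e N‖ := by have := hiso (N+1) hmem; simpa using this
    rw [hf] at hstep
    rw [Finset.sum_Icc_succ_top (by omega : 1 ≤ N + 1),
        Finset.sum_Icc_succ_top (by omega : 1 ≤ N + 1),
        Finset.sum_Icc_succ_top (by omega : 1 ≤ N + 1)]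
    simp only [Nat.add_sub_cancel] at *
    linarith

/-- **Summed error inequality for the LPS-LG method (proof of Theorem 4.1).**
With `ρₙ := eₙ − P eₙ`, if `⟨eₙ − fₙ₋₁, v⟩ + Δt·S(eₙ,v) = Δt·S(cₙ,v)` for all `v ∈ V` and
`‖fₙ₋₁‖ = ‖eₙ₋₁‖`, then
`‖e_N‖² + (1/2)Σ‖eₙ−fₙ₋₁‖² + Δt·Σ S(eₙ,eₙ) ≤ ‖e₀‖² + Σ(2‖ρₙ‖² + 3Δt(S(cₙ,cₙ)+S(ρₙ,ρₙ)))`. -/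
theorem lps_lg_summed_error_inequality
    {H : Type*} [NormedAddCommGroup H] [InnerProductSpace ℝ H] [CompleteSpace H]
    (V : Submodule ℝ H) (hV : IsClosed (V : Set H)) [V.HasOrthogonalProjection]
    (Δt : ℝ) (hΔt : 0 < Δt) (N : ℕ) (hN : 1 ≤ N)
    (S : H →ₗ[ℝ] H →ₗ[ℝ] ℝ) (hSsymm : ∀ w z, S w z = S z w) (hSpos : ∀ w, 0 ≤ S w w)
    (c e f : ℕ → H)
    (herr : ∀ n ∈ Finset.Icc 1 N, ∀ v ∈ V,
      ⟪e n - f (n - 1), v⟫ + Δt * S (e n) v = Δt * S (c n) v)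
    (hiso : ∀ n ∈ Finset.Icc 1 N, ‖f (n - 1)‖ = ‖e (n - 1)‖) :
    ‖e N‖ ^ 2 + (1 / 2) * ∑ n ∈ Finset.Icc 1 N, ‖e n - f (n - 1)‖ ^ 2 +
        Δt * ∑ n ∈ Finset.Icc 1 N, S (e n) (e n) ≤
      ‖e 0‖ ^ 2 + ∑ n ∈ Finset.Icc 1 N,
        (2 * ‖e n - (V.orthogonalProjectionOnto (e n) : H)‖ ^ 2 +
          3 * Δt * (S (c n) (c n) +
            S (e n - (V.orthogonalProjectionOnto (e n) : H))
              (e n - (V.orthogonalProjectionOnto (e n) : H)))) := by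
  exact summed V Δt hΔt S hSsymm hSpos c e f N herr hiso
end

section
/- Let H be a real Hilbert space, V ⊆ H a closed subspace, T₁, …, T_N : H → H linear isometries, Δt > 0, and for each 1 ≤ n ≤ N let Bₙ : H × H → ℝ be a bilinear form with Bₙ(w,w) ≥ 0 for all w ∈ H. Let c_h⁰ ∈ V and, for 1 ≤ n ≤ N, let c_hⁿ ∈ V satisfy ⟨c_hⁿ − Tₙ c_h^{n−1}, v⟩ + Δt·Bₙ(c_hⁿ, v) = 0 for all v ∈ V. Then ‖c_h^N‖² + Σ_{n=1}^{N} ‖c_hⁿ − Tₙ c_h^{n−1}‖² + 2Δt·Σ_{n=1}^{N} Bₙ(c_hⁿ, c_hⁿ) ≤ ‖c_h⁰‖². -/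
open RealInnerProductSpace Finset

/-- **L²-stability of the discontinuity-capturing LG method (Lemma 5.1).**
If each `Bₙ` is a nonnegative bilinear form, the `Tₙ` are linear isometries, and
`⟨c_hⁿ − Tₙ c_h^{n−1}, v⟩ + Δt·Bₙ(c_hⁿ, v) = 0` for all `v ∈ V`, then
`‖c_h^N‖² + Σ‖c_hⁿ − Tₙ c_h^{n−1}‖² + 2Δt·Σ Bₙ(c_hⁿ,c_hⁿ) ≤ ‖c_h⁰‖²`. -/
theorem dc_lg_stability
    {H : Type*} [NormedAddCommGroup H] [InnerProductSpace ℝ H] [CompleteSpace H]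
    (V : Submodule ℝ H) (hV : IsClosed (V : Set H))
    (N : ℕ) (T : ℕ → H →ₗᵢ[ℝ] H) (Δt : ℝ) (hΔt : 0 < Δt)
    (B : ℕ → H →ₗ[ℝ] H →ₗ[ℝ] ℝ) (hB : ∀ n, ∀ w, 0 ≤ B n w w)
    (ch : ℕ → H) (hch0 : ch 0 ∈ V) (hchV : ∀ n ∈ Finset.Icc 1 N, ch n ∈ V)
    (hscheme : ∀ n ∈ Finset.Icc 1 N, ∀ v ∈ V,
      ⟪ch n - T n (ch (n - 1)), v⟫ + Δt * B n (ch n) v = 0) :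
    ‖ch N‖ ^ 2 + ∑ n ∈ Finset.Icc 1 N, ‖ch n - T n (ch (n - 1))‖ ^ 2 +
        2 * Δt * ∑ n ∈ Finset.Icc 1 N, B n (ch n) (ch n) ≤ ‖ch 0‖ ^ 2 := by
  -- per-step energy identity
  have key : ∀ n ∈ Finset.Icc 1 N,
      ‖ch n‖ ^ 2 + ‖ch n - T n (ch (n - 1))‖ ^ 2 + 2 * Δt * B n (ch n) (ch n)
        = ‖ch (n - 1)‖ ^ 2 := by
    intro n hn
    have hs := hscheme n hn (ch n) (hchV n hn)
    set a := ch n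
    set b := T n (ch (n - 1)) with hb
    have hnb : ‖b‖ = ‖ch (n - 1)‖ := (T n).norm_map _
    have h1 := norm_sub_sq_real a b
    have h2 : ⟪a - b, a⟫ = ‖a‖ ^ 2 - ⟪a, b⟫ := by
      rw [inner_sub_left, real_inner_self_eq_norm_sq, real_inner_comm b a]
    rw [h2] at hs
    rw [← hnb]
    nlinarith [hs, h1]
  induction N with
  | zero => simp
  | succ N ih =>
    have hmem : ∀ n ∈ Finset.Icc 1 N, n ∈ Finset.Icc 1 (N + 1) := by
      intro n hn
      simp only [Finset.mem_Icc] at *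
      omega
    have hN1 : N + 1 ∈ Finset.Icc 1 (N + 1) := by simp
    have ihh := ih (fun n hn => hchV n (hmem n hn))
      (fun n hn => hscheme n (hmem n hn)) (fun n hn => key n (hmem n hn))
    rw [Finset.sum_Icc_succ_top (Nat.le_add_left 1 N),
        Finset.sum_Icc_succ_top (Nat.le_add_left 1 N)]
    simp only [Nat.add_sub_cancel]
    have hk := key (N + 1) hN1
    simp only [Nat.add_sub_cancel] at hk
    nlinarith [hk, ihh]
end

section
/- Let H be a real Hilbert space, V ⊆ H a closed subspace, Δt > 0, and B : H × H → ℝ a symmetric bilinear form with B(w,w) ≥ 0 for all w ∈ H. Let e, g, f, ρ, c ∈ H satisfy: (i) ⟨e − f, v⟩ + Δt·B(e, v) = Δt·B(c, v) for all v ∈ V; (ii) ‖f‖ = ‖g‖; and (iii) e − ρ ∈ V. Then ‖e‖² + (3/4)‖e − f‖² − ‖g‖² + Δt·B(e,e) ≤ 4‖ρ‖² + 3Δt·B(c,c) + 3Δt·B(ρ,ρ). -/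
open RealInnerProductSpace

/-- **Per-step inequality (5.8) for the discontinuity-capturing LG method.**
If `B` is a nonnegative symmetric bilinear form, `⟨e − f, v⟩ + Δt·B(e,v) = Δt·B(c,v)`
for all `v ∈ V`, `‖f‖ = ‖g‖`, and `e − ρ ∈ V`, then
`‖e‖² + (3/4)‖e−f‖² − ‖g‖² + Δt·B(e,e) ≤ 4‖ρ‖² + 3Δt·B(c,c) + 3Δt·B(ρ,ρ)`. -/
theorem dc_lg_per_step_inequality
    {H : Type*} [NormedAddCommGroup H] [InnerProductSpace ℝ H] [CompleteSpace H]
    (V : Submodule ℝ H) (hV : IsClosed (V : Set H))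
    (Δt : ℝ) (hΔt : 0 < Δt)
    (B : H →ₗ[ℝ] H →ₗ[ℝ] ℝ) (hBsymm : ∀ w z, B w z = B z w) (hBpos : ∀ w, 0 ≤ B w w)
    (e g f ρ c : H)
    (herr : ∀ v ∈ V, ⟪e - f, v⟫ + Δt * B e v = Δt * B c v)
    (hiso : ‖f‖ = ‖g‖) (hθ : e - ρ ∈ V) :
    ‖e‖ ^ 2 + (3 / 4) * ‖e - f‖ ^ 2 - ‖g‖ ^ 2 + Δt * B e e ≤
      4 * ‖ρ‖ ^ 2 + 3 * Δt * B c c + 3 * Δt * B ρ ρ := by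
  have hv := herr (e - ρ) hθ
  rw [map_sub, inner_sub_right] at hv
  simp only [LinearMap.sub_apply, map_sub] at hv
  -- hv : ⟪e-f,e⟫ - ⟪e-f,ρ⟫ + Δt * (B e e - B e ρ) = Δt * (B c e - B c ρ)
  -- parallelogram-type identity
  have key : 2 * ⟪e - f, e⟫ = ‖e‖ ^ 2 + ‖e - f‖ ^ 2 - ‖f‖ ^ 2 := by
    have h1 : ‖e - f‖ ^ 2 = ‖e‖ ^ 2 - 2 * ⟪e, f⟫ + ‖f‖ ^ 2 := by
      rw [@norm_sub_sq_real]
    have h2 : ⟪e - f, e⟫ = ‖e‖ ^ 2 - ⟪f, e⟫ := by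
      rw [inner_sub_left, real_inner_self_eq_norm_sq]
    have h3 : ⟪f, e⟫ = ⟪e, f⟫ := real_inner_comm e f
    nlinarith [h1, h2, h3]
  -- Cauchy–Schwarz / Young for the inner product term
  have hρ : 2 * ⟪e - f, ρ⟫ ≤ (1 / 4) * ‖e - f‖ ^ 2 + 4 * ‖ρ‖ ^ 2 := by
    have := real_inner_le_norm (e - f) ρ
    nlinarith [this, sq_nonneg (‖e - f‖ / 2 - 2 * ‖ρ‖), norm_nonneg (e - f), norm_nonneg ρ]
  -- Young inequalities for B
  have h1 : 2 * B c e ≤ 2 * B c c + B e e / 2 := by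
    have h0 := hBpos ((2 : ℝ) • c - e)
    simp only [map_sub, map_smul, LinearMap.sub_apply, LinearMap.smul_apply,
      smul_eq_mul] at h0
    nlinarith [h0, hBsymm c e]
  have h2 : -(2 * B c ρ) ≤ B c c + B ρ ρ := by
    have h0 := hBpos (c + ρ)
    simp only [map_add, LinearMap.add_apply] at h0
    nlinarith [h0, hBsymm c ρ]
  have h3 : 2 * B e ρ ≤ B e e / 2 + 2 * B ρ ρ := by
    have h0 := hBpos (e - (2 : ℝ) • ρ)
    simp only [map_sub, map_smul, LinearMap.sub_apply, LinearMap.smul_apply,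
      smul_eq_mul] at h0
    nlinarith [h0, hBsymm e ρ]
  have hfg : ‖f‖ ^ 2 = ‖g‖ ^ 2 := by rw [hiso]
  nlinarith [hv, key, hρ, hfg,
    mul_le_mul_of_nonneg_left h1 hΔt.le,
    mul_le_mul_of_nonneg_left h2 hΔt.le,
    mul_le_mul_of_nonneg_left h3 hΔt.le]
end
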